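/- Let kG be the group algebra of a finite group over a field k, and W a finite-dimensional kG-module. The functor X ↦ X ⊗_k Ω_{kG}(k) (tensor over k with diagonal G-action) sends W-split short exact sequences of kG-modules to W-split short exact sequences, and hence induces a triangulated endofunctor of the W-stable category isomorphic to the Heller translate Ω_{kG}. -/

import Mathlib

open CategoryTheory MonoidalCategory Limits

/-- A short exact sequence `S` of `kG`-modules is `W`-split if it is short exact and
becomes split after tensoring with `W` over `k` (with the diagonal `G`-action). -/
def WSplit {k : Type} [Field k] {G : Type} [Group G]
    (W : Rep k G) (S : ShortComplex (Rep k G)) : Prop :=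
  S.ShortExact ∧ Nonempty ((S.map (tensorLeft W)).Splitting)

/-- Let `G` be a finite group and `k` a field of characteristic dividing `|G|`, and let
`W` be a finite-dimensional `kG`-module. Let `Ω(k) = ker π` be the Heller translate of the
trivial module `k`, where `π : P ⟶ k` is an epimorphism from a projective module. Then the
functor `X ↦ Ω(k) ⊗ X` (diagonal `G`-action) sends `W`-split short exact sequences to
`W`-split short exact sequences (hence induces a triangulated endofunctor of the
`W`-stable category isomorphic to the Heller translate `Ω_{kG}`). -/
theorem stmt_11 {k : Type} [Field k] {G : Type} [Group G] [Fintype G]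
    (hchar : (Fintype.card G : k) = 0)
    (W : Rep k G) (hW : FiniteDimensional k W.V)
    (P : Rep k G) (hP : Projective P)
    (π : P ⟶ 𝟙_ (Rep k G)) (hπ : Epi π)
    (S : ShortComplex (Rep k G)) (hS : WSplit W S) :
    WSplit W (S.map (tensorLeft (kernel π))) := by
  obtain ⟨hSE, ⟨σ⟩⟩ := hS
  set Ω : Rep k G := kernel π with hΩ
  have hmono := hSE.mono_f
  have hepi := hSE.epi_g
  set F : Rep k G ⥤ ModuleCat k := forget₂ (Rep k G) (ModuleCat k) with hF
  refine ⟨?_, ⟨?_⟩⟩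
  · -- short exactness
    have hMf := preserves_mono_of_preservesLimit F S.f
    have hMg := preserves_epi_of_preservesColimit F S.g
    have hinj : Function.Injective S.f.hom.toLinearMap :=
      (ModuleCat.mono_iff_injective (F.map S.f)).1 hMf
    have hsurj : Function.Surjective S.g.hom.toLinearMap :=
      (ModuleCat.epi_iff_surjective (F.map S.g)).1 hMg
    have hex : (S.map F).Exact := hSE.exact.map F
    have hfe : Function.Exact S.f.hom.toLinearMap S.g.hom.toLinearMap :=
      (ShortComplex.ShortExact.moduleCat_exact_iff_function_exact (S.map F)).1 hex
    have hinjT : Function.Injective (LinearMap.lTensor Ω.V S.f.hom.toLinearMap) :=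
      Module.Flat.lTensor_preserves_injective_linearMap S.f.hom.toLinearMap hinj
    have hsurjT : Function.Surjective (LinearMap.lTensor Ω.V S.g.hom.toLinearMap) :=
      LinearMap.lTensor_surjective Ω.V hsurj
    have hexT : Function.Exact (LinearMap.lTensor Ω.V S.f.hom.toLinearMap) (LinearMap.lTensor Ω.V S.g.hom.toLinearMap) :=
      Module.Flat.lTensor_exact Ω.V hfe
    have hexT' : ((S.map (tensorLeft Ω)).map F).Exact := by
      rw [ShortComplex.ShortExact.moduleCat_exact_iff_function_exact]
      exact hexT
    haveI : Mono (S.map (tensorLeft Ω)).f := by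
      refine F.mono_of_mono_map ?_
      rw [ModuleCat.mono_iff_injective]
      exact hinjT
    haveI : Epi (S.map (tensorLeft Ω)).g := by
      refine F.epi_of_epi_map ?_
      rw [ModuleCat.epi_iff_surjective]
      exact hsurjT
    exact ⟨(ShortComplex.exact_map_iff_of_faithful _ F).1 hexT'⟩
  · -- splitting
    have e : tensorLeft W ⋙ tensorLeft Ω ≅ tensorLeft Ω ⋙ tensorLeft W :=
      (tensorLeftTensor Ω W).symm ≪≫ ((tensoringLeft (Rep k G)).mapIso (β_ Ω W))
        ≪≫ tensorLeftTensor W Ω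
    exact (σ.map (tensorLeft Ω)).ofIso (ShortComplex.mapNatIso S e)
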